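/- Fix a ≥ 0 and t ≥ 0, and let μ be a measure on [0,∞) such that ∫ e^{−s·x} μ(dx) = exp(−t·f_a(s)) for every s ≥ 0 (μ is the law of the subordinator with Laplace exponent f_a at time t). Then for every b ≥ 0 and every λ ≥ 0, ∫ exp(−x·f_b(λ)) μ(dx) = exp(−t·f_{a+b}(λ)); i.e., subordinating by f_b yields the subordinator with Laplace exponent f_{a+b}. -/

import Mathlib

open MeasureTheory

/-- The homographic family `f_a(x) = x e^a / (1 + x (e^a - 1))`. -/
noncomputable def f (a x : ℝ) : ℝ := x * Real.exp a / (1 + x * (Real.exp a - 1))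

/-- Let `μ` be a measure on `[0, ∞)` whose Laplace transform is `s ↦ exp (-t f_a(s))` (the law
of the subordinator with Laplace exponent `f_a` at time `t`). Then for every `b ≥ 0` and
`λ ≥ 0`, `∫ exp (-x f_b(λ)) μ(dx) = exp (-t f_{a+b}(λ))`: subordinating by `f_b` yields the
subordinator with Laplace exponent `f_{a+b}`. -/
theorem subordination_f (a t : ℝ) (ha : 0 ≤ a) (ht : 0 ≤ t)
    (μ : Measure ℝ) (hsupp : μ (Set.Iio 0) = 0)
    (hμ : ∀ s : ℝ, 0 ≤ s → ∫ x, Real.exp (-s * x) ∂μ = Real.exp (-t * f a s)) :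
    ∀ b : ℝ, 0 ≤ b → ∀ l : ℝ, 0 ≤ l →
      ∫ x, Real.exp (-x * f b l) ∂μ = Real.exp (-t * f (a + b) l) := by
  intro b hb l hl
  have heb : (1:ℝ) ≤ Real.exp b := by
    simpa using Real.exp_le_exp.mpr hb
  have hea : (1:ℝ) ≤ Real.exp a := by
    simpa using Real.exp_le_exp.mpr ha
  have hden_b : 0 < 1 + l * (Real.exp b - 1) := by nlinarith
  have hs_nonneg : 0 ≤ f b l := by
    have : 0 ≤ l * Real.exp b := by positivity
    exact div_nonneg this hden_b.le
  have hcomp : f a (f b l) = f (a + b) l := by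
    unfold f
    rw [Real.exp_add]
    have hab : (1:ℝ) ≤ Real.exp a * Real.exp b := by nlinarith
    have hab' : 0 ≤ l * (Real.exp a * Real.exp b - 1) :=
      mul_nonneg hl (by linarith)
    have hne : (1 - l + l * Real.exp b * Real.exp a) ≠ 0 := by nlinarith
    have hden2 : (1 + l * Real.exp b / (1 + l * (Real.exp b - 1)) * (Real.exp a - 1)) ≠ 0 := by
      have h0 : 0 ≤ l * Real.exp b / (1 + l * (Real.exp b - 1)) * (Real.exp a - 1) :=
        mul_nonneg (div_nonneg (by positivity) hden_b.le) (by linarith)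
      positivity
    field_simp
    have hpos : (0:ℝ) < 1 + l * (Real.exp b - 1) + l * Real.exp b * (Real.exp a - 1) := by
      nlinarith
    rw [div_eq_iff hpos.ne']
    rw [div_mul_eq_mul_div, eq_div_iff (by nlinarith)]
    ring
  calc ∫ x, Real.exp (-x * f b l) ∂μ
      = ∫ x, Real.exp (-(f b l) * x) ∂μ := by
        congr 1; ext x; ring_nf
    _ = Real.exp (-t * f a (f b l)) := hμ _ hs_nonneg
    _ = Real.exp (-t * f (a + b) l) := by rw [hcomp]
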